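/- Define, for 0 < α < 1/2, v(α) = (2cos(α) − cos(2α))/sin(2α), β̄(α) = arctan((−v(α) + √(v(α)² − ((9/4)cos²(α) − 1)·(5/4 − v(α)²)))/((9/4)cos²(α) − 1)), γ̄(α) = arccos((4/3)·cos(α + β̄(α))), and set w(α) = sin(α)/sin(α + β̄(α)), y(α) = sin(β̄(α))/sin(α + β̄(α)), d(α) = y(α)·sin(2α)/sin(2α + γ̄(α)), x(α) = y(α)·sin(γ̄(α))/sin(2α + γ̄(α)), and E(α) = (w(α) + d(α))/(1 − x(α)). Then sin(α)·E(α) → 18/79 as α → 0⁺. -/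

import Mathlib

open Real Filter Topology

noncomputable def vOpt (α : ℝ) : ℝ := (2 * Real.cos α - Real.cos (2 * α)) / Real.sin (2 * α)

noncomputable def betaOpt (α : ℝ) : ℝ :=
  Real.arctan ((-vOpt α + Real.sqrt ((vOpt α) ^ 2 -
      (9 / 4 * (Real.cos α) ^ 2 - 1) * (5 / 4 - (vOpt α) ^ 2))) /
    (9 / 4 * (Real.cos α) ^ 2 - 1))

noncomputable def gammaOpt (α : ℝ) : ℝ := Real.arccos (4 / 3 * Real.cos (α + betaOpt α))

noncomputable def wOpt (α : ℝ) : ℝ := Real.sin α / Real.sin (α + betaOpt α)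

noncomputable def yOpt (α : ℝ) : ℝ := Real.sin (betaOpt α) / Real.sin (α + betaOpt α)

noncomputable def dOpt (α : ℝ) : ℝ :=
  yOpt α * Real.sin (2 * α) / Real.sin (2 * α + gammaOpt α)

noncomputable def xOpt (α : ℝ) : ℝ :=
  yOpt α * Real.sin (gammaOpt α) / Real.sin (2 * α + gammaOpt α)

noncomputable def EOpt (α : ℝ) : ℝ := (wOpt α + dOpt α) / (1 - xOpt α)

/-! ### Auxiliary definitions -/

noncomputable def tArg (α : ℝ) : ℝ :=
  (-vOpt α + Real.sqrt ((vOpt α) ^ 2 -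
      (9 / 4 * (Real.cos α) ^ 2 - 1) * (5 / 4 - (vOpt α) ^ 2))) /
    (9 / 4 * (Real.cos α) ^ 2 - 1)

lemma betaOpt_eq (α : ℝ) : betaOpt α = Real.arctan (tArg α) := rfl

noncomputable def Tf (α : ℝ) : ℝ := α * tArg α

noncomputable def Rf (α : ℝ) : ℝ := Real.sqrt (α ^ 2 + Tf α ^ 2)

noncomputable def Pf (α : ℝ) : ℝ := α * Real.sin α + Tf α * Real.cos α

noncomputable def zf (α : ℝ) : ℝ := 4 / 3 * ((α * Real.cos α - Tf α * Real.sin α) / Rf α)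

noncomputable def Sf (α : ℝ) : ℝ :=
  Real.sin (2 * α) * zf α + Real.cos (2 * α) * Real.sqrt (1 - zf α ^ 2)

noncomputable def Kf (α : ℝ) : ℝ := (Real.cos (2 * α) * Real.cos α - 1) / α ^ 2

noncomputable def NumG (α : ℝ) : ℝ :=
  (Real.sin α / α) * ((Real.sin α / α) * Rf α / Pf α * Sf α
    + Tf α / Pf α * (Real.sin (2 * α) / α))

noncomputable def DenG (α : ℝ) : ℝ :=
  (Real.sin (2 * α) / α) * (4 / 3 * ((Real.cos α - Tf α * (Real.sin α / α)) / Rf α))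
    + (Real.cos (2 * α) * (Real.sin α / α) + Tf α * Kf α) / Pf α * Real.sqrt (1 - zf α ^ 2)

/-! ### Basic limits -/

lemma lim_id : Tendsto (fun α : ℝ => α) (𝓝[>] (0:ℝ)) (𝓝 0) :=
  tendsto_id.mono_left nhdsWithin_le_nhds

lemma lim_cos : Tendsto (fun α : ℝ => Real.cos α) (𝓝[>] (0:ℝ)) (𝓝 1) := by
  have := (Real.continuous_cos.tendsto 0).mono_left (nhdsWithin_le_nhds (s := Set.Ioi (0:ℝ)))
  simpa using this

lemma lim_cos2 : Tendsto (fun α : ℝ => Real.cos (2 * α)) (𝓝[>] (0:ℝ)) (𝓝 1) := by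
  have hc : Continuous (fun α : ℝ => Real.cos (2 * α)) := by continuity
  have := (hc.tendsto 0).mono_left (nhdsWithin_le_nhds (s := Set.Ioi (0:ℝ)))
  simpa using this

lemma lim_sin : Tendsto (fun α : ℝ => Real.sin α) (𝓝[>] (0:ℝ)) (𝓝 0) := by
  have := (Real.continuous_sin.tendsto 0).mono_left (nhdsWithin_le_nhds (s := Set.Ioi (0:ℝ)))
  simpa using this

lemma lim_sin2 : Tendsto (fun α : ℝ => Real.sin (2 * α)) (𝓝[>] (0:ℝ)) (𝓝 0) := by
  have hc : Continuous (fun α : ℝ => Real.sin (2 * α)) := by continuity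
  have := (hc.tendsto 0).mono_left (nhdsWithin_le_nhds (s := Set.Ioi (0:ℝ)))
  simpa using this

lemma map_const_mul (c : ℝ) (hc : 0 < c) :
    Tendsto (fun α : ℝ => c * α) (𝓝[>] (0:ℝ)) (𝓝[>] (0:ℝ)) := by
  apply tendsto_nhdsWithin_of_tendsto_nhds_of_eventually_within
  · have hc : Continuous (fun α : ℝ => c * α) := by continuity
    have := hc.tendsto (0:ℝ)
    simpa using this.mono_left (nhdsWithin_le_nhds (s := Set.Ioi (0:ℝ)))
  · filter_upwards [self_mem_nhdsWithin] with x hx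
    exact mul_pos hc hx

lemma lim_sin_div : Tendsto (fun α : ℝ => Real.sin α / α) (𝓝[>] (0:ℝ)) (𝓝 1) := by
  have h := Real.hasDerivAt_sin 0
  rw [hasDerivAt_iff_tendsto_slope] at h
  have h2 : Tendsto (slope Real.sin 0) (𝓝[>] (0:ℝ)) (𝓝 (Real.cos 0)) :=
    h.mono_left (nhdsWithin_mono _ (fun x hx => ne_of_gt hx))
  rw [Real.cos_zero] at h2
  refine h2.congr (fun x => ?_)
  simp [slope_def_field, Real.sin_zero]

lemma lim_sin2_div : Tendsto (fun α : ℝ => Real.sin (2 * α) / α) (𝓝[>] (0:ℝ)) (𝓝 2) := by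
  have h := (lim_sin_div.comp (map_const_mul 2 (by norm_num))).const_mul 2
  rw [show (2:ℝ) * 1 = 2 by norm_num] at h
  refine h.congr' ?_
  filter_upwards [self_mem_nhdsWithin] with x hx
  have hx' : x ≠ 0 := ne_of_gt hx
  simp only [Function.comp]
  field_simp

lemma lim_div_sin2 : Tendsto (fun α : ℝ => α / Real.sin (2 * α)) (𝓝[>] (0:ℝ)) (𝓝 (1/2)) := by
  have h := lim_sin2_div.inv₀ (by norm_num)
  rw [show ((2:ℝ))⁻¹ = 1/2 by norm_num] at h
  refine h.congr (fun x => ?_)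
  rw [inv_div]

lemma lim_one_sub_cos : Tendsto (fun α : ℝ => (1 - Real.cos α) / α ^ 2) (𝓝[>] (0:ℝ)) (𝓝 (1/2)) := by
  have h := ((lim_sin_div.comp (map_const_mul (1/2) (by norm_num))).mul
    (lim_sin_div.comp (map_const_mul (1/2) (by norm_num)))).const_mul (1/2)
  rw [show (1:ℝ)/2 * (1 * 1) = 1/2 by norm_num] at h
  refine h.congr' ?_
  filter_upwards [self_mem_nhdsWithin] with x hx
  have hx' : x ≠ 0 := ne_of_gt hx
  have hc : Real.cos x = 1 - 2 * Real.sin (x / 2) ^ 2 := by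
    rw [show x = 2 * (x / 2) by ring, Real.cos_two_mul', Real.cos_sq']
    ring_nf
  simp only [Function.comp]
  rw [hc]
  have : (1:ℝ)/2 * x = x / 2 := by ring
  rw [this]
  field_simp
  ring

lemma lim_Kf : Tendsto Kf (𝓝[>] (0:ℝ)) (𝓝 (-(5/2))) := by
  have h2 : Tendsto (fun α : ℝ => (1 - Real.cos (2 * α)) / α ^ 2) (𝓝[>] (0:ℝ)) (𝓝 2) := by
    have h := (lim_one_sub_cos.comp (map_const_mul 2 (by norm_num))).const_mul 4
    rw [show (4:ℝ) * (1/2) = 2 by norm_num] at h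
    refine h.congr' ?_
    filter_upwards [self_mem_nhdsWithin] with x hx
    have hx' : x ≠ 0 := ne_of_gt hx
    simp only [Function.comp]
    field_simp
    ring
  have h := ((lim_cos2.neg.mul lim_one_sub_cos).sub h2)
  rw [show -(1:ℝ) * (1/2) - 2 = -(5/2) by norm_num] at h
  refine h.congr' ?_
  filter_upwards [self_mem_nhdsWithin] with x hx
  have hx' : x ≠ 0 := ne_of_gt hx
  unfold Kf
  field_simp
  ring

lemma lim_av : Tendsto (fun α : ℝ => α * vOpt α) (𝓝[>] (0:ℝ)) (𝓝 (1/2)) := by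
  have h := (lim_cos.const_mul 2 |>.sub lim_cos2).mul lim_div_sin2
  rw [show ((2:ℝ) * 1 - 1) * (1/2) = 1/2 by norm_num] at h
  refine h.congr (fun x => ?_)
  unfold vOpt
  ring

lemma mul_sqrt_eq (α X : ℝ) (hα : 0 ≤ α) : α * Real.sqrt X = Real.sqrt (α ^ 2 * X) := by
  rw [Real.sqrt_mul (sq_nonneg α), Real.sqrt_sq hα]

lemma lim_Tf : Tendsto Tf (𝓝[>] (0:ℝ)) (𝓝 (1/5)) := by
  have hc : Tendsto (fun α : ℝ => 9 / 4 * (Real.cos α) ^ 2 - 1) (𝓝[>] (0:ℝ)) (𝓝 (5/4)) := by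
    have h := ((lim_cos.pow 2).const_mul (9/4)).sub
      (tendsto_const_nhds : Tendsto (fun _ : ℝ => (1:ℝ)) (𝓝[>] (0:ℝ)) (𝓝 1))
    rw [show (9:ℝ)/4 * 1^2 - 1 = 5/4 by norm_num] at h
    exact h
  have hin : Tendsto (fun α : ℝ => (α * vOpt α) ^ 2 * (9 / 4 * (Real.cos α) ^ 2)
      - 5 / 4 * (9 / 4 * (Real.cos α) ^ 2 - 1) * α ^ 2) (𝓝[>] (0:ℝ)) (𝓝 (9/16)) := by
    have h := ((lim_av.pow 2).mul ((lim_cos.pow 2).const_mul (9/4))).sub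
      ((hc.const_mul (5/4)).mul (lim_id.pow 2))
    rw [show ((1:ℝ)/2)^2 * (9/4 * 1^2) - 5/4 * (5/4) * 0^2 = 9/16 by norm_num] at h
    exact h
  have hsq : Tendsto (fun α : ℝ => Real.sqrt ((α * vOpt α) ^ 2 * (9 / 4 * (Real.cos α) ^ 2)
      - 5 / 4 * (9 / 4 * (Real.cos α) ^ 2 - 1) * α ^ 2)) (𝓝[>] (0:ℝ)) (𝓝 (3/4)) := by
    have h := hin.sqrt
    rwa [show Real.sqrt (9/16) = 3/4 by
      rw [show (9:ℝ)/16 = (3/4)^2 by norm_num, Real.sqrt_sq (by norm_num)]] at h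
  have h := (lim_av.neg.add hsq).div hc (by norm_num)
  rw [show (-(1/2) + 3/4) / ((5:ℝ)/4) = 1/5 by norm_num] at h
  refine h.congr' ?_
  filter_upwards [self_mem_nhdsWithin] with α hα
  simp only [Pi.div_apply]
  unfold Tf tArg
  rw [mul_div_assoc']
  congr 1
  rw [mul_add, mul_neg, mul_sqrt_eq _ _ hα.le]
  congr 2
  ring

/-! ### Derived limits -/

lemma lim_Pf : Tendsto Pf (𝓝[>] (0:ℝ)) (𝓝 (1/5)) := by
  have h := (lim_id.mul lim_sin).add (lim_Tf.mul lim_cos)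
  rw [show (0:ℝ) * 0 + 1/5 * 1 = 1/5 by norm_num] at h
  exact h

lemma lim_Rf : Tendsto Rf (𝓝[>] (0:ℝ)) (𝓝 (1/5)) := by
  have h := ((lim_id.pow 2).add (lim_Tf.pow 2)).sqrt
  rw [show (0:ℝ)^2 + (1/5)^2 = 1/25 by norm_num,
    show Real.sqrt (1/25) = 1/5 by
      rw [show (1:ℝ)/25 = (1/5)^2 by norm_num, Real.sqrt_sq (by norm_num)]] at h
  exact h

lemma lim_zf : Tendsto zf (𝓝[>] (0:ℝ)) (𝓝 0) := by
  have h := (((lim_id.mul lim_cos).sub (lim_Tf.mul lim_sin)).div lim_Rf (by norm_num)).const_mul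
    (4/3)
  rw [show (4:ℝ)/3 * ((0 * 1 - 1/5 * 0) / (1/5)) = 0 by norm_num] at h
  exact h

lemma lim_sqrt_zf : Tendsto (fun α => Real.sqrt (1 - zf α ^ 2)) (𝓝[>] (0:ℝ)) (𝓝 1) := by
  have h := ((tendsto_const_nhds : Tendsto (fun _ : ℝ => (1:ℝ)) (𝓝[>] (0:ℝ)) (𝓝 1)).sub
    (lim_zf.pow 2)).sqrt
  rw [show (1:ℝ) - 0^2 = 1 by norm_num, Real.sqrt_one] at h
  exact h

lemma lim_Sf : Tendsto Sf (𝓝[>] (0:ℝ)) (𝓝 1) := by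
  have h := (lim_sin2.mul lim_zf).add (lim_cos2.mul lim_sqrt_zf)
  rw [show (0:ℝ) * 0 + 1 * 1 = 1 by norm_num] at h
  exact h

lemma lim_NumG : Tendsto NumG (𝓝[>] (0:ℝ)) (𝓝 3) := by
  have h := lim_sin_div.mul ((((lim_sin_div.mul lim_Rf).div lim_Pf (by norm_num)).mul lim_Sf).add
    ((lim_Tf.div lim_Pf (by norm_num)).mul lim_sin2_div))
  rw [show (1:ℝ) * (1 * (1/5) / (1/5) * 1 + 1/5 / (1/5) * 2) = 3 by norm_num] at h
  exact h

lemma lim_DenG : Tendsto DenG (𝓝[>] (0:ℝ)) (𝓝 (79/6)) := by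
  have h := (lim_sin2_div.mul ((((lim_cos.sub (lim_Tf.mul lim_sin_div)).div lim_Rf
      (by norm_num)).const_mul (4/3)))).add
    (((((lim_cos2.mul lim_sin_div).add (lim_Tf.mul lim_Kf)).div lim_Pf (by norm_num)).mul
      lim_sqrt_zf))
  rw [show (2:ℝ) * (4/3 * ((1 - 1/5 * 1) / (1/5))) + (1 * 1 + 1/5 * -(5/2)) / (1/5) * 1 = 79/6
    by norm_num] at h
  exact h

/-! ### Pointwise identities -/

lemma sin_add_arctan (α t : ℝ) :
    Real.sin (α + Real.arctan t) = (Real.sin α + t * Real.cos α) / Real.sqrt (1 + t ^ 2) := by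
  rw [Real.sin_add, Real.sin_arctan, Real.cos_arctan]
  ring

lemma cos_add_arctan (α t : ℝ) :
    Real.cos (α + Real.arctan t) = (Real.cos α - t * Real.sin α) / Real.sqrt (1 + t ^ 2) := by
  rw [Real.cos_add, Real.sin_arctan, Real.cos_arctan]
  ring

lemma sqrt_one_add_sq_pos (t : ℝ) : 0 < Real.sqrt (1 + t ^ 2) :=
  Real.sqrt_pos.2 (by positivity)

lemma alpha_sqrt (α : ℝ) (hα : 0 < α) :
    α * Real.sqrt (1 + tArg α ^ 2) = Rf α := by
  unfold Rf Tf
  rw [← Real.sqrt_sq hα.le, ← Real.sqrt_mul (sq_nonneg α), Real.sqrt_sq hα.le]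
  congr 1
  ring

lemma sin_add_beta (α : ℝ) (hα : 0 < α) :
    Real.sin (α + betaOpt α) = Pf α / Rf α := by
  rw [betaOpt_eq, sin_add_arctan, ← alpha_sqrt α hα]
  unfold Pf Tf
  rw [div_eq_div_iff (by positivity) (by positivity)]
  ring

lemma cos_add_beta (α : ℝ) (hα : 0 < α) :
    Real.cos (α + betaOpt α) = (α * Real.cos α - Tf α * Real.sin α) / Rf α := by
  rw [betaOpt_eq, cos_add_arctan, ← alpha_sqrt α hα]
  unfold Tf
  rw [div_eq_div_iff (by positivity) (by positivity)]
  ring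

lemma sin_beta (α : ℝ) (hα : 0 < α) :
    Real.sin (betaOpt α) = Tf α / Rf α := by
  rw [betaOpt_eq, Real.sin_arctan, ← alpha_sqrt α hα]
  unfold Tf
  rw [div_eq_div_iff (by positivity) (by positivity)]
  ring

/-! ### Main theorem -/

theorem stmt18 :
    Tendsto (fun α : ℝ => Real.sin α * EOpt α) (𝓝[>] 0) (𝓝 (18 / 79)) := by
  have hlim : Tendsto (fun α => NumG α / DenG α) (𝓝[>] (0:ℝ)) (𝓝 (18/79)) := by
    have h := lim_NumG.div lim_DenG (by norm_num)
    rwa [show (3:ℝ) / (79/6) = 18/79 by norm_num] at h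
  refine hlim.congr' ?_ |>.mono_left le_rfl
  -- eventual equality
  have hz1 : ∀ᶠ α in 𝓝[>] (0:ℝ), |zf α| ≤ 1/2 := by
    have := lim_zf.abs
    rw [abs_zero] at this
    exact this.eventually_le_const (by norm_num)
  have hR : ∀ᶠ α in 𝓝[>] (0:ℝ), 0 < Rf α :=
    lim_Rf.eventually_const_lt (by norm_num : (0:ℝ) < 1/5)
  have hP : ∀ᶠ α in 𝓝[>] (0:ℝ), 0 < Pf α :=
    lim_Pf.eventually_const_lt (by norm_num : (0:ℝ) < 1/5)
  have hS : ∀ᶠ α in 𝓝[>] (0:ℝ), 0 < Sf α :=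
    lim_Sf.eventually_const_lt (by norm_num : (0:ℝ) < 1)
  have hD : ∀ᶠ α in 𝓝[>] (0:ℝ), 0 < DenG α :=
    lim_DenG.eventually_const_lt (by norm_num : (0:ℝ) < 79/6)
  filter_upwards [self_mem_nhdsWithin, hz1, hR, hP, hS, hD] with α hα hz1 hR hP hS hD
  have hα : (0:ℝ) < α := hα
  have hα' : α ≠ 0 := ne_of_gt hα
  -- identities
  have hsab := sin_add_beta α hα
  have hcab := cos_add_beta α hα
  have hsb := sin_beta α hα
  have hzf : 4 / 3 * Real.cos (α + betaOpt α) = zf α := by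
    rw [hcab]; unfold zf; ring
  have hcg : Real.cos (gammaOpt α) = zf α := by
    unfold gammaOpt
    rw [hzf]
    exact Real.cos_arccos (by linarith [abs_le.1 hz1]) (by linarith [abs_le.1 hz1])
  have hsg : Real.sin (gammaOpt α) = Real.sqrt (1 - zf α ^ 2) := by
    unfold gammaOpt
    rw [hzf, Real.sin_arccos]
  have hS2 : Real.sin (2 * α + gammaOpt α) = Sf α := by
    rw [Real.sin_add, hcg, hsg]
    unfold Sf
    ring
  have hPne : Pf α ≠ 0 := ne_of_gt hP
  have hRne : Rf α ≠ 0 := ne_of_gt hR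
  have hPne' : α * Real.sin α + Tf α * Real.cos α ≠ 0 := by
    have := hPne; unfold Pf at this; exact this
  -- D identity
  have hDval : Sf α - (Tf α / Pf α) * Real.sqrt (1 - zf α ^ 2) = α ^ 2 * DenG α := by
    unfold Sf DenG Kf Pf
    generalize Real.sqrt (1 - zf α ^ 2) = s
    unfold zf
    have hP2 : α * Real.sin α + Real.cos α * Tf α ≠ 0 := by rwa [mul_comm (Real.cos α)]
    field_simp
    ring
  have hDpos : 0 < Sf α - (Tf α / Pf α) * Real.sqrt (1 - zf α ^ 2) := by
    rw [hDval]
    exact mul_pos (pow_pos hα 2) hD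
  -- y value
  have hy : yOpt α = Tf α / Pf α := by
    unfold yOpt
    rw [hsb, hsab]
    rw [div_div_div_cancel_right₀]
    exact ne_of_gt hR
  -- w value
  have hw : wOpt α = Real.sin α * Rf α / Pf α := by
    unfold wOpt
    rw [hsab]
    field_simp
  -- now compute
  have hSne : Sf α ≠ 0 := ne_of_gt hS
  have hDne : DenG α ≠ 0 := ne_of_gt hD
  unfold EOpt xOpt dOpt
  rw [hS2, hy, hw]
  have h1x : 1 - Tf α / Pf α * Real.sin (gammaOpt α) / Sf α
      = (Sf α - (Tf α / Pf α) * Real.sqrt (1 - zf α ^ 2)) / Sf α := by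
    rw [hsg]
    field_simp
  rw [hsg] at h1x ⊢
  rw [h1x, hDval]
  unfold NumG
  field_simp
  all_goals ring
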